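/- arXiv:math/0703651 — 2 statements merged into one kernel-verified Lean document; each statement's English description precedes it below -/
import Mathlib

section
/- Let A be a unital associative ℂ-algebra and let T be an n×n matrix over A[[s]] with constant term the identity matrix satisfying the Yangian relations. Then the matrix T(−u)^{-1} — the inverse in the matrix ring over A[[s]] of the matrix obtained from T by the substitution s ↦ −s, which exists since the constant term is the identity — also satisfies the Yangian relations. (This is the statement that the assignment T(u) ↦ T(−u)^{-1} defines an automorphism of the Yangian Y(gl_n).) -/
noncomputable section

/-- For a 1-based index `i ∈ {1,…,n}` (encoded 0-based as `j : Fin n`), the index `ĩ`: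
`ĩ = i−1` if `i` is even, `ĩ = i+1` if `i` is odd and `i < n`, and `ĩ = n` if `i = n` is odd. -/
def tilde {n : ℕ} (j : Fin n) : Fin n :=
  if j.1 % 2 = 1 then ⟨j.1 - 1, lt_of_le_of_lt (Nat.sub_le _ _) j.2⟩
  else if h : j.1 + 1 < n then ⟨j.1 + 1, h⟩ else j

/-- `θ_i = 1` for all `i` if `ϵ = +1`, and `θ_i = (−1)^{i−1}` (1-based) if `ϵ = −1`. -/
def theta (ϵ : ℤ) {n : ℕ} (j : Fin n) : ℤ :=
  if ϵ = 1 then 1 else (-1) ^ (j : ℕ)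

/-- The image of `f(s) ∈ A[[s]]` in `A[[s]][[t]]`, as a series in `s` only. -/
def inS {A : Type*} [Ring A] (f : PowerSeries A) : PowerSeries (PowerSeries A) :=
  PowerSeries.C f

/-- The image of `f ∈ A[[s]]` in `A[[s]][[t]]` with `s` replaced by `t`. -/
def inT {A : Type*} [Ring A] (f : PowerSeries A) : PowerSeries (PowerSeries A) :=
  PowerSeries.mk fun k => PowerSeries.C (PowerSeries.coeff k f)

/-- The variable `s` of `A[[s]][[t]]`. -/
def svar (A : Type*) [Ring A] : PowerSeries (PowerSeries A) :=
  PowerSeries.C PowerSeries.X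

/-- The variable `t` of `A[[s]][[t]]`. -/
def tvar (A : Type*) [Ring A] : PowerSeries (PowerSeries A) :=
  PowerSeries.X

/-- The defining relations of the Yangian `Y(gl_n)`, with denominators cleared:
`(t−s)·(T_{ij}(s)T_{kl}(t) − T_{kl}(t)T_{ij}(s)) = st·(T_{kj}(s)T_{il}(t) − T_{kj}(t)T_{il}(s))`
in `A[[s,t]]`. -/
def YangianRel {A : Type*} [Ring A] {n : ℕ}
    (T : Matrix (Fin n) (Fin n) (PowerSeries A)) : Prop :=
  ∀ i j k l : Fin n,
    (tvar A - svar A) * (inS (T i j) * inT (T k l) - inT (T k l) * inS (T i j)) =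
      svar A * tvar A * (inS (T k j) * inT (T i l) - inT (T k j) * inS (T i l))

/-- The defining relations of the extended twisted Yangian `X(g_n)`, with denominators
cleared, in `A[[s,t]]`. -/
def ReflectionRel (ϵ : ℤ) {A : Type*} [Ring A] {n : ℕ}
    (S : Matrix (Fin n) (Fin n) (PowerSeries A)) : Prop :=
  ∀ i j k l : Fin n,
    (tvar A ^ 2 - svar A ^ 2) * (inS (S i j) * inT (S k l) - inT (S k l) * inS (S i j)) =
      svar A * tvar A * (svar A + tvar A) *
          (inS (S k j) * inT (S i l) - inT (S k j) * inS (S i l))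
        - ϵ • (svar A * tvar A * (tvar A - svar A) *
            ((theta ϵ k * theta ϵ j) • (inS (S i (tilde k)) * inT (S (tilde j) l))
              - (theta ϵ i * theta ϵ l) • (inT (S k (tilde i)) * inS (S (tilde l) j))))
        + (ϵ * theta ϵ i * theta ϵ j) • (svar A ^ 2 * tvar A ^ 2 *
            (inS (S k (tilde i)) * inT (S (tilde j) l)
              - inT (S k (tilde i)) * inS (S (tilde j) l)))

/-- The substitution `s ↦ −s` on `A[[s]]`. -/
def negSub {A : Type*} [Ring A] (f : PowerSeries A) : PowerSeries A :=
  PowerSeries.mk fun k => (-1) ^ k * PowerSeries.coeff k f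

/-- The matrix with entries `S_{ij}(u) = Σ_k θ_i θ_k T_{k̃,ĩ}(−u) T_{k j}(u)`. -/
def twistMat (ϵ : ℤ) {A : Type*} [Ring A] {n : ℕ}
    (T : Matrix (Fin n) (Fin n) (PowerSeries A)) :
    Matrix (Fin n) (Fin n) (PowerSeries A) :=
  fun i j => ∑ k : Fin n,
    (theta ϵ i * theta ϵ k) • (negSub (T (tilde k) (tilde i)) * T k j)

section Aux
open PowerSeries

variable {B : Type*} [Ring B]

lemma negSub_coeff (f : PowerSeries B) (k : ℕ) :
    coeff k (negSub f) = (-1) ^ k * coeff k f := coeff_mk _ _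

/-- `negSub` as a ring homomorphism. -/
def negHom (B : Type*) [Ring B] : PowerSeries B →+* PowerSeries B where
  toFun := negSub
  map_one' := by
    ext k
    rw [negSub_coeff]
    simp [PowerSeries.coeff_one]
    split <;> simp_all
  map_mul' f g := by
    ext k
    rw [negSub_coeff, PowerSeries.coeff_mul, PowerSeries.coeff_mul, Finset.mul_sum]
    refine Finset.sum_congr rfl fun p hp => ?_
    rw [Finset.HasAntidiagonal.mem_antidiagonal] at hp
    rw [negSub_coeff, negSub_coeff]
    have h1 : Commute ((-1:B)^p.2) (coeff p.1 f) := (Commute.neg_one_left _).pow_left _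
    calc (-1:B) ^ k * (coeff p.1 f * coeff p.2 g)
        = (-1) ^ p.1 * (((-1:B) ^ p.2 * coeff p.1 f) * coeff p.2 g) := by
          rw [← hp, pow_add]; noncomm_ring
      _ = (-1) ^ p.1 * ((coeff p.1 f * (-1) ^ p.2) * coeff p.2 g) := by rw [← h1.eq]
      _ = (-1) ^ p.1 * coeff p.1 f * ((-1) ^ p.2 * coeff p.2 g) := by noncomm_ring
  map_zero' := by ext k; simp [negSub_coeff]
  map_add' f g := by ext k; simp [negSub_coeff, mul_add]

lemma negHom_C (b : B) : negHom B (C b) = C b := by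
  ext k
  show coeff k (negSub _) = _
  rw [negSub_coeff]
  simp only [PowerSeries.coeff_C]
  split <;> simp_all

lemma negHom_X : negHom B (X : PowerSeries B) = -X := by
  ext k
  show coeff k (negSub _) = _
  rw [negSub_coeff]
  simp only [PowerSeries.coeff_X, map_neg]
  split <;> simp_all

/-- The swap of the two variables of `A[[s]][[t]]`, as a ring homomorphism. -/
def swapHom (B : Type*) [Ring B] :
    PowerSeries (PowerSeries B) →+* PowerSeries (PowerSeries B) where
  toFun F := PowerSeries.mk fun k => PowerSeries.mk fun m =>
    coeff k (coeff m F)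
  map_one' := by
    ext k m
    simp only [coeff_mk, PowerSeries.coeff_one]
    split <;> split <;> simp_all [PowerSeries.coeff_one]
  map_mul' F G := by
    ext k m
    simp only [coeff_mk, PowerSeries.coeff_mul, map_sum]
    rw [Finset.sum_comm]
  map_zero' := by ext k m; simp
  map_add' F G := by ext k m; simp

lemma swap_coeff (F : PowerSeries (PowerSeries B)) (k m : ℕ) :
    coeff m (coeff k (swapHom B F)) =
      coeff k (coeff m F) := by
  simp [swapHom, coeff_mk]

lemma swap_inS (f : PowerSeries B) : swapHom B (inS f) = inT f := by
  ext k m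
  rw [swap_coeff]
  simp [inS, inT, PowerSeries.coeff_C]
  split <;> simp_all

lemma swap_inT (f : PowerSeries B) : swapHom B (inT f) = inS f := by
  ext k m
  rw [swap_coeff]
  simp [inS, inT, PowerSeries.coeff_C]
  split <;> simp_all

lemma swap_tvar : swapHom B (tvar B) = svar B := by
  ext k m
  rw [swap_coeff]
  simp [tvar, svar, PowerSeries.coeff_X, PowerSeries.coeff_C, PowerSeries.coeff_one]
  split <;> split <;> simp_all [PowerSeries.coeff_X, PowerSeries.coeff_one]

lemma swap_svar : swapHom B (svar B) = tvar B := by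
  ext k m
  rw [swap_coeff]
  simp [tvar, svar, PowerSeries.coeff_X, PowerSeries.coeff_C, PowerSeries.coeff_one]
  split <;> split <;> simp_all [PowerSeries.coeff_X, PowerSeries.coeff_one]

lemma inT_eq (f : PowerSeries B) : inT f = PowerSeries.map (C (R := B)) f := by
  ext k; rw [inT, coeff_mk, PowerSeries.coeff_map]

lemma inT_mul (f g : PowerSeries B) : inT (f * g) = inT f * inT g := by
  rw [inT_eq, inT_eq, inT_eq, map_mul]
lemma inT_one : inT (1 : PowerSeries B) = 1 := by rw [inT_eq, map_one]
lemma inT_zero : inT (0 : PowerSeries B) = 0 := by rw [inT_eq, map_zero]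
lemma inS_mul (f g : PowerSeries B) : inS (f * g) = inS f * inS g := by
  rw [inS, inS, inS, map_mul]
lemma inS_one : inS (1 : PowerSeries B) = 1 := by rw [inS, map_one]
lemma inS_zero : inS (0 : PowerSeries B) = 0 := by rw [inS, map_zero]

/-- The substitution `(s,t) ↦ (−s,−t)` on `A[[s]][[t]]`. -/
def PhiHom (B : Type*) [Ring B] :
    PowerSeries (PowerSeries B) →+* PowerSeries (PowerSeries B) :=
  (negHom (PowerSeries B)).comp (PowerSeries.map (negHom B))

lemma negHom_apply (f : PowerSeries B) : negHom B f = negSub f := rfl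

lemma Phi_inS (f : PowerSeries B) : PhiHom B (inS f) = inS (negSub f) := by
  rw [PhiHom, RingHom.comp_apply, inS, PowerSeries.map_C, inS]
  exact negHom_C _

lemma Phi_svar : PhiHom B (svar B) = -svar B := by
  have h1 : (C (R := PowerSeries B)) (-X) = -(C (R := PowerSeries B) X) := map_neg _ _
  rw [PhiHom, RingHom.comp_apply, svar, PowerSeries.map_C, negHom_X, h1, map_neg, negHom_C]

lemma Phi_tvar : PhiHom B (tvar B) = -tvar B := by
  rw [PhiHom, RingHom.comp_apply, tvar, PowerSeries.map_X, negHom_X]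

lemma Phi_inT (f : PowerSeries B) : PhiHom B (inT f) = inT (negSub f) := by
  refine PowerSeries.ext fun k => ?_
  rw [PhiHom, RingHom.comp_apply, negHom_apply, negSub_coeff, PowerSeries.coeff_map,
    inT, coeff_mk, negHom_C, inT, coeff_mk, negSub_coeff, map_mul, map_pow, map_neg, map_one]

lemma svar_comm (x : PowerSeries (PowerSeries B)) : svar B * x = x * svar B := by
  refine PowerSeries.ext fun k => ?_
  rw [svar, PowerSeries.coeff_C_mul, PowerSeries.coeff_mul_C]
  exact (PowerSeries.commute_X _).eq.symm

lemma tvar_comm (x : PowerSeries (PowerSeries B)) : tvar B * x = x * tvar B :=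
  ((PowerSeries.commute_X x).symm).eq

end Aux

section Mats
open PowerSeries
variable {B : Type*} [Ring B] {n : ℕ}

/-- `X ⊗ 1` with `inS` entries. -/
def mat1 (X : Matrix (Fin n) (Fin n) (PowerSeries B)) :
    Matrix (Fin n × Fin n) (Fin n × Fin n) (PowerSeries (PowerSeries B)) :=
  Matrix.of fun p q => if p.2 = q.2 then inS (X p.1 q.1) else 0

/-- `1 ⊗ X` with `inT` entries. -/
def mat2 (X : Matrix (Fin n) (Fin n) (PowerSeries B)) :
    Matrix (Fin n × Fin n) (Fin n × Fin n) (PowerSeries (PowerSeries B)) :=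
  Matrix.of fun p q => if p.1 = q.1 then inT (X p.2 q.2) else 0

/-- The cleared R-matrix `(t−s)·1 + st·P`. -/
def Qmat (B : Type*) [Ring B] (n : ℕ) :
    Matrix (Fin n × Fin n) (Fin n × Fin n) (PowerSeries (PowerSeries B)) :=
  Matrix.of fun p q =>
    (if p = q then tvar B - svar B else 0) + (if q = (p.2, p.1) then svar B * tvar B else 0)

lemma prodswap_eq (q r : Fin n × Fin n) : (q = (r.2, r.1)) = (r = (q.2, q.1)) := by
  apply propext
  constructor <;> (rintro rfl; simp)

lemma mat1_mul (X Y : Matrix (Fin n) (Fin n) (PowerSeries B)) :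
    mat1 (X * Y) = mat1 X * mat1 Y := by
  ext p q
  rw [Matrix.mul_apply, Fintype.sum_prod_type]
  by_cases h : p.2 = q.2 <;>
    simp [mat1, h, Matrix.mul_apply, inS, map_sum, map_mul, mul_ite, ite_mul,
      Finset.sum_ite_eq, Finset.sum_ite_eq']

lemma mat2_mul (X Y : Matrix (Fin n) (Fin n) (PowerSeries B)) :
    mat2 (X * Y) = mat2 X * mat2 Y := by
  ext p q
  rw [Matrix.mul_apply, Fintype.sum_prod_type]
  by_cases h : p.1 = q.1 <;>
    simp [mat2, h, Matrix.mul_apply, inT_eq, map_sum, map_mul, mul_ite, ite_mul,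
      Finset.sum_ite_eq, Finset.sum_ite_eq']

lemma mat1_one : mat1 (1 : Matrix (Fin n) (Fin n) (PowerSeries B)) = 1 := by
  ext p q
  simp only [mat1, Matrix.of_apply, Matrix.one_apply]
  by_cases h1 : p.1 = q.1 <;> by_cases h2 : p.2 = q.2 <;>
    simp_all [Prod.ext_iff, inS_one, inS_zero, Matrix.one_apply]

lemma mat2_one : mat2 (1 : Matrix (Fin n) (Fin n) (PowerSeries B)) = 1 := by
  ext p q
  simp only [mat2, Matrix.of_apply, Matrix.one_apply]
  by_cases h1 : p.1 = q.1 <;> by_cases h2 : p.2 = q.2 <;>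
    simp_all [Prod.ext_iff, inT_one, inT_zero, Matrix.one_apply]

lemma mul12_apply (X Y : Matrix (Fin n) (Fin n) (PowerSeries B)) (p q : Fin n × Fin n) :
    (mat1 X * mat2 Y) p q = inS (X p.1 q.1) * inT (Y p.2 q.2) := by
  rw [Matrix.mul_apply, Fintype.sum_prod_type]
  simp [mat1, mat2, Matrix.of_apply, ite_mul, mul_ite, zero_mul, mul_zero,
    Finset.sum_ite_eq, Finset.sum_ite_eq']

lemma mul21_apply (X Y : Matrix (Fin n) (Fin n) (PowerSeries B)) (p q : Fin n × Fin n) :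
    (mat2 X * mat1 Y) p q = inT (X p.2 q.2) * inS (Y p.1 q.1) := by
  rw [Matrix.mul_apply, Fintype.sum_prod_type]
  simp [mat1, mat2, Matrix.of_apply, ite_mul, mul_ite, zero_mul, mul_zero,
    Finset.sum_ite_eq, Finset.sum_ite_eq']

lemma Qmat_mul_apply (X : Matrix (Fin n × Fin n) (Fin n × Fin n) (PowerSeries (PowerSeries B)))
    (p q : Fin n × Fin n) :
    (Qmat B n * X) p q =
      (tvar B - svar B) * X p q + (svar B * tvar B) * X (p.2, p.1) q := by
  rw [Matrix.mul_apply]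
  simp only [Qmat, Matrix.of_apply, add_mul, ite_mul, zero_mul, Finset.sum_add_distrib,
    Finset.sum_ite_eq, Finset.sum_ite_eq', Finset.mem_univ, if_true]

lemma mul_Qmat_apply (X : Matrix (Fin n × Fin n) (Fin n × Fin n) (PowerSeries (PowerSeries B)))
    (p q : Fin n × Fin n) :
    (X * Qmat B n) p q =
      X p q * (tvar B - svar B) + X p (q.2, q.1) * (svar B * tvar B) := by
  rw [Matrix.mul_apply]
  simp only [Qmat, Matrix.of_apply, mul_add, mul_ite, mul_zero, Finset.sum_add_distrib,
    prodswap_eq, Finset.sum_ite_eq, Finset.sum_ite_eq', Finset.mem_univ, if_true]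

end Mats

section MainAux
variable {R : Type*} [Ring R]

lemma rtt_rearrange (s t a b c d : R)
    (hb : b * (t - s) = (t - s) * b) (hd : d * (s * t) = (s * t) * d)
    (h : (-t - -s) * (a - b) = -s * -t * (c - d)) :
    (t - s) * a + s * t * c = b * (t - s) + d * (s * t) := by
  rw [hb, hd]
  have h2 : (t - s) * a + s * t * c - ((t - s) * b + s * t * d)
      = -((-t - -s) * (a - b) - -s * -t * (c - d)) := by noncomm_ring
  rw [sub_eq_zero.mpr h, neg_zero] at h2
  exact sub_eq_zero.mp h2

lemma final_rearrange (s t a b c d : R)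
    (hb : b * (s - t) = (s - t) * b) (hd : d * (t * s) = (t * s) * d)
    (hts : t * s = s * t)
    (h : b * (s - t) + d * (t * s) = (s - t) * a + t * s * c) :
    (t - s) * (a - b) = s * t * (c - d) := by
  rw [hb, hd, hts] at h
  have h2 : (t - s) * (a - b) - s * t * (c - d)
      = ((s - t) * b + s * t * d) - ((s - t) * a + s * t * c) := by noncomm_ring
  rw [sub_eq_zero.mpr h] at h2
  exact sub_eq_zero.mp h2

end MainAux

theorem statement5 (n : ℕ) (hn : 0 < n) (A : Type*) [Ring A] [Algebra ℂ A]
    (T : Matrix (Fin n) (Fin n) (PowerSeries A))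
    (hT0 : ∀ i j, PowerSeries.constantCoeff (T i j) = if i = j then 1 else 0)
    (hT : YangianRel T)
    (T' : Matrix (Fin n) (Fin n) (PowerSeries A))
    (hleft : (Matrix.of fun i j => negSub (T i j)) * T' = 1)
    (hright : T' * (Matrix.of fun i j => negSub (T i j)) = 1) :
    YangianRel T' := by
  set U : Matrix (Fin n) (Fin n) (PowerSeries A) :=
    Matrix.of fun i j => negSub (T i j) with hUdef
  have hU1S1 : mat1 U * mat1 T' = 1 := by rw [← mat1_mul, hleft, mat1_one]
  have hS1U1 : mat1 T' * mat1 U = 1 := by rw [← mat1_mul, hright, mat1_one]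
  have hU2S2 : mat2 U * mat2 T' = 1 := by rw [← mat2_mul, hleft, mat2_one]
  have hS2U2 : mat2 T' * mat2 U = 1 := by rw [← mat2_mul, hright, mat2_one]
  have cw : ∀ x : PowerSeries (PowerSeries A),
      x * (tvar A - svar A) = (tvar A - svar A) * x := fun x => by
    rw [mul_sub, sub_mul, tvar_comm, svar_comm]
  have cz : ∀ x : PowerSeries (PowerSeries A),
      x * (svar A * tvar A) = (svar A * tvar A) * x := fun x => by
    calc x * (svar A * tvar A) = x * svar A * tvar A := (mul_assoc _ _ _).symm
      _ = svar A * x * tvar A := by rw [← svar_comm]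
      _ = svar A * (x * tvar A) := mul_assoc _ _ _
      _ = svar A * (tvar A * x) := by rw [← tvar_comm]
      _ = svar A * tvar A * x := (mul_assoc _ _ _).symm
  have cw' : ∀ x : PowerSeries (PowerSeries A),
      x * (svar A - tvar A) = (svar A - tvar A) * x := fun x => by
    rw [mul_sub, sub_mul, tvar_comm, svar_comm]
  have cz' : ∀ x : PowerSeries (PowerSeries A),
      x * (tvar A * svar A) = (tvar A * svar A) * x := fun x => by
    calc x * (tvar A * svar A) = x * tvar A * svar A := (mul_assoc _ _ _).symm
      _ = tvar A * x * svar A := by rw [← tvar_comm]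
      _ = tvar A * (x * svar A) := mul_assoc _ _ _
      _ = tvar A * (svar A * x) := by rw [← svar_comm]
      _ = tvar A * svar A * x := (mul_assoc _ _ _).symm
  have hComm : Qmat A n * (mat1 U * mat2 U) = (mat2 U * mat1 U) * Qmat A n := by
    refine Matrix.ext fun p q => ?_
    rw [Qmat_mul_apply, mul_Qmat_apply, mul12_apply, mul12_apply, mul21_apply, mul21_apply]
    have hphi := congrArg (PhiHom A) (hT p.1 q.1 p.2 q.2)
    simp only [map_mul, map_sub, Phi_inS, Phi_inT, Phi_svar, Phi_tvar] at hphi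
    simp only [hUdef, Matrix.of_apply]
    exact rtt_rearrange _ _ _ _ _ _ (cw _) (cz _) hphi
  have h1 : (mat1 U * mat2 U) * (mat2 T' * mat1 T') = 1 := by
    rw [mul_assoc, ← mul_assoc (mat2 U), hU2S2, one_mul, hU1S1]
  have h2 : (mat1 T' * mat2 T') * (mat2 U * mat1 U) = 1 := by
    rw [mul_assoc, ← mul_assoc (mat2 T'), hS2U2, one_mul, hS1U1]
  have h3 : Qmat A n = ((mat2 U * mat1 U) * Qmat A n) * (mat2 T' * mat1 T') := by
    rw [← hComm, mul_assoc, h1, mul_one]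
  have h2' : mat1 T' * mat2 T' * mat2 U * mat1 U = 1 := by
    rw [mul_assoc (mat1 T'), hS2U2, mul_one, hS1U1]
  have hFinal : (mat1 T' * mat2 T') * Qmat A n = Qmat A n * (mat2 T' * mat1 T') := by
    conv_lhs => rw [h3]
    simp only [← mul_assoc]
    rw [h2', one_mul]
  intro i j k l
  have hR2 : ((mat1 T' * mat2 T') * Qmat A n) (k, i) (l, j)
      = (Qmat A n * (mat2 T' * mat1 T')) (k, i) (l, j) := by rw [hFinal]
  rw [mul_Qmat_apply, Qmat_mul_apply, mul12_apply, mul12_apply, mul21_apply, mul21_apply]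
    at hR2
  have hsig := congrArg (swapHom A) hR2
  simp only [map_add, map_mul, map_sub, swap_inS, swap_inT, swap_svar, swap_tvar] at hsig
  have hts : tvar A * svar A = svar A * tvar A := (svar_comm (tvar A)).symm
  exact final_rearrange _ _ _ _ _ _ (cw' _) (cz' _) hts hsig


end
end

section
/- Let R be a commutative ℚ-algebra and let f ∈ R[[t]] be a formal power series with constant coefficient 1 such that f(t)·f(−t) = 1, where f(−t) denotes the image of f under the R-algebra endomorphism of R[[t]] sending t to −t. Then there exists g ∈ R[[t]] with constant coefficient 1 such that g(−t) = f(t)·g(t). -/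
open Finset

noncomputable def sqrtCoeff {R : Type*} [CommRing R] [Algebra ℚ R] (F : ℕ → R) : ℕ → R
  | 0 => 1
  | (n+1) => algebraMap ℚ R (1/2) *
      (F (n+1) - ∑ k ∈ (Finset.range n).attach, sqrtCoeff F (k.1 + 1) * sqrtCoeff F (n - k.1))
decreasing_by
  · have := Finset.mem_range.mp k.2; omega
  · omega

lemma sqrtCoeff_succ {R : Type*} [CommRing R] [Algebra ℚ R] (F : ℕ → R) (n : ℕ) :
    sqrtCoeff F (n+1) = algebraMap ℚ R (1/2) *
      (F (n+1) - ∑ k ∈ Finset.range n, sqrtCoeff F (k + 1) * sqrtCoeff F (n - k)) := by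
  rw [sqrtCoeff, Finset.sum_attach (Finset.range n) (fun k => sqrtCoeff F (k + 1) * sqrtCoeff F (n - k))]

lemma sqrt_exists {R : Type*} [CommRing R] [Algebra ℚ R] (F : PowerSeries R)
    (hF0 : PowerSeries.constantCoeff F = 1) :
    ∃ g : PowerSeries R, PowerSeries.constantCoeff g = 1 ∧ g * g = F := by
  set c : ℕ → R := sqrtCoeff (fun n => PowerSeries.coeff n F) with hc
  refine ⟨PowerSeries.mk c, ?_, ?_⟩
  · simp [hc, sqrtCoeff]
  · ext n
    rw [PowerSeries.coeff_mul, Finset.Nat.sum_antidiagonal_eq_sum_range_succ_mk]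
    simp only [PowerSeries.coeff_mk]
    cases n with
    | zero =>
        simpa [hc, sqrtCoeff] using hF0.symm
    | succ n =>
        rw [Finset.sum_range_succ, Finset.sum_range_succ']
        have h0 : c 0 = 1 := by simp [hc, sqrtCoeff]
        have hsum : ∀ k ∈ Finset.range n, c (k + 1) * c (n + 1 - (k + 1))
            = c (k + 1) * c (n - k) := by
          intro k hk; congr 2; omega
        rw [Finset.sum_congr rfl hsum, h0]
        have hc1 : c (n+1) = algebraMap ℚ R (1/2) *
            (PowerSeries.coeff (n+1) F - ∑ k ∈ Finset.range n, c (k+1) * c (n-k)) := by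
          rw [hc]; exact sqrtCoeff_succ _ n
        have h2 : (algebraMap ℚ R (1/2)) * 2 = 1 := by
          rw [← map_ofNat (algebraMap ℚ R) 2, ← map_mul]; norm_num
        rw [Nat.sub_zero, Nat.sub_self, h0, one_mul, mul_one, hc1]
        set h := algebraMap ℚ R (1/2)
        set S := ∑ x ∈ Finset.range n, c (x + 1) * c (n - x)
        set Fc := PowerSeries.coeff (n + 1) F
        calc S + h * (Fc - S) + h * (Fc - S) = S + (h * 2) * (Fc - S) := by ring
        _ = S + (Fc - S) := by rw [h2, one_mul]
        _ = Fc := by ring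

theorem statement11 (R : Type*) [CommRing R] [Algebra ℚ R] (f : PowerSeries R)
    (hf0 : PowerSeries.constantCoeff f = 1)
    (hf : f * PowerSeries.rescale (-1 : R) f = 1) :
    ∃ g : PowerSeries R, PowerSeries.constantCoeff g = 1 ∧
      PowerSeries.rescale (-1 : R) g = f * g := by
  obtain ⟨g, hg0, hgg⟩ := sqrt_exists (PowerSeries.rescale (-1 : R) f) (by
    rw [← PowerSeries.coeff_zero_eq_constantCoeff, PowerSeries.coeff_rescale]
    simpa using hf0)
  refine ⟨g, hg0, ?_⟩
  set a := PowerSeries.rescale (-1 : R) g with ha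
  set b := f * g with hb
  have haa : a * a = f := by
    rw [ha, ← map_mul, hgg, PowerSeries.rescale_rescale]
    norm_num [PowerSeries.rescale_one]
  have hbb : b * b = f := by
    rw [hb]
    calc f * g * (f * g) = f * (f * PowerSeries.rescale (-1:R) f) := by rw [← hgg]; ring
    _ = f := by rw [hf, mul_one]
  have hsum_unit : IsUnit (a + b) := by
    rw [PowerSeries.isUnit_iff_constantCoeff]
    have hca : PowerSeries.constantCoeff a = 1 := by
      rw [ha, ← PowerSeries.coeff_zero_eq_constantCoeff, PowerSeries.coeff_rescale]
      simpa using hg0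
    have hcb : PowerSeries.constantCoeff b = 1 := by
      rw [hb, map_mul, hf0, hg0, mul_one]
    rw [map_add, hca, hcb, one_add_one_eq_two]
    exact IsUnit.of_mul_eq_one (a := 2) (algebraMap ℚ R (1/2)) (by
      rw [← map_ofNat (algebraMap ℚ R) 2, ← map_mul]; norm_num)
  have hzero : (a - b) * (a + b) = 0 := by
    have : a * a - b * b = 0 := by rw [haa, hbb, sub_self]
    calc (a - b) * (a + b) = a * a - b * b := by ring
    _ = 0 := this
  have hab : a - b = 0 := hsum_unit.mul_right_cancel (by rw [hzero, zero_mul])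
  exact sub_eq_zero.mp hab
end
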